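/- Let DMark be any lazy deterministic marking algorithm with cache size k. For every request sequence s, every eviction made by DMark occurs at a request that is new or worrisome; hence DMark(s) is at most the number of new requests of s plus the number of worrisome requests of s (worrisome being judged with respect to DMark's own cache). -/
import Mathlib


/-!
Paging: every eviction of a lazy deterministic marking algorithm occurs at a request that
is new or worrisome; hence its cost is at most the number of new requests plus the number
of worrisome requests.

A deterministic on-line algorithm is modelled by its cache function
`cache : List U → Finset U` (the cache contents after processing a given prefix of
requests); this is on-line by construction. Phases, and the classification of the request
following a prefix `s` as new / redundant / worrisome, are tracked by the pair
(items of the previous phase, items of the current phase).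
-/

namespace Paging

variable {U : Type*} [DecidableEq U]

/-- State after processing a prefix: (items of the previous phase, items of the current
phase). On request `x`: stay in the current phase if at most `k` distinct items result,
otherwise start a new phase. -/
def pstep (k : ℕ) (p : Finset U × Finset U) (x : U) : Finset U × Finset U :=
  if (insert x p.2).card ≤ k then (p.1, insert x p.2) else (p.2, {x})

/-- (items of the previous phase, items of the current phase) after processing `s`. -/
def pstate (k : ℕ) (s : List U) : Finset U × Finset U := s.foldl (pstep k) (∅, ∅)

/-- The request to item `x` following prefix `s` is *new*: `x` was requested neither
earlier in its phase nor in the previous phase. (If `x` starts a new phase, its phase has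
no earlier requests and its previous phase consists of the current-phase items of `s`.) -/
def IsNewReq (k : ℕ) (s : List U) (x : U) : Prop :=
  x ∉ (pstate k s).2 ∧ (x ∉ (pstate k s).1 ∨ k < (insert x (pstate k s).2).card)

/-- The request to item `x` following prefix `s` is *worrisome* with respect to a cache
`C`: `x` was requested in the previous phase or earlier in the current phase (i.e. it is
not new), but is not in the cache. -/
def IsWorrisomeReq (k : ℕ) (s : List U) (C : Finset U) (x : U) : Prop :=
  ¬IsNewReq k s x ∧ x ∉ C

/-- The marked items, computed on the reversed request sequence (most recent request
first), for an algorithm with cache function `C`: each requested item is marked; when an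
eviction is needed (requested item absent from a full cache) and all cached items are
marked, all marks are first erased. -/
def marksRev (k : ℕ) (C : List U → Finset U) : List U → Finset U
  | [] => ∅
  | x :: rest =>
      let M := marksRev k C rest
      let pre := rest.reverse
      if x ∉ C pre ∧ (C pre).card = k ∧ C pre ⊆ M then {x} else insert x M

/-- The set of marked items after processing `s`, for an algorithm with cache
function `C`. -/
def marksOf (k : ℕ) (C : List U → Finset U) (s : List U) : Finset U := marksRev k C s.reverse

/-- A lazy deterministic marking algorithm with cache size `k`: it starts with an empty
cache; on a hit it changes nothing; on a miss with a non-full cache it just inserts the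
requested item; on a miss with a full cache it evicts exactly one item, which must be
unmarked (unless all cached items are marked, in which case all marks are first erased and
any cached item may be evicted). -/
structure LazyMarkingAlg (U : Type*) [DecidableEq U] (k : ℕ) where
  cache : List U → Finset U
  init : cache [] = ∅
  card_le : ∀ s, (cache s).card ≤ k
  hit : ∀ s x, x ∈ cache s → cache (s ++ [x]) = cache s
  miss_notfull : ∀ s x, x ∉ cache s → (cache s).card < k →
      cache (s ++ [x]) = insert x (cache s)
  miss_full : ∀ s x, x ∉ cache s → (cache s).card = k →
      ∃ y ∈ cache s, (cache s ⊆ marksOf k cache s ∨ y ∉ marksOf k cache s) ∧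
        cache (s ++ [x]) = insert x ((cache s).erase y)

/-- The cost (total number of evictions) of the on-line algorithm with cache function `C`
on the request sequence `s`. -/
def algCostOf (C : List U → Finset U) (s : List U) : ℕ :=
  ∑ t ∈ Finset.range s.length, (C (s.take t) \ C (s.take (t + 1))).card

open Classical in
/-- The number of new requests in `s`. -/
noncomputable def newReqCount (k : ℕ) (s : List U) : ℕ :=
  ((Finset.range s.length).filter fun t =>
    ∃ x, s[t]? = some x ∧ IsNewReq k (s.take t) x).card

open Classical in
/-- The number of worrisome requests in `s`, with respect to the caches of the on-line
algorithm with cache function `C`. -/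
noncomputable def worrisomeReqCount (k : ℕ) (C : List U → Finset U) (s : List U) : ℕ :=
  ((Finset.range s.length).filter fun t =>
    ∃ x, s[t]? = some x ∧ IsWorrisomeReq k (s.take t) (C (s.take t)) x).card

/-- for a lazy deterministic marking algorithm `A` with cache size
`k ≥ 1`, every eviction occurs at a request that is new or worrisome; hence the cost of
`A` on `s` is at most the number of new requests plus the number of worrisome requests
of `s`. -/
theorem lazyMarking_cost_le_new_add_worrisome (k : ℕ) (hk : 1 ≤ k)
    (A : LazyMarkingAlg U k) (s : List U) :
    (∀ t < s.length, (A.cache (s.take t) \ A.cache (s.take (t + 1))) ≠ ∅ →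
        ∃ x, s[t]? = some x ∧
          (IsNewReq k (s.take t) x ∨ IsWorrisomeReq k (s.take t) (A.cache (s.take t)) x)) ∧
    algCostOf A.cache s ≤ newReqCount k s + worrisomeReqCount k A.cache s := by
  classical
  have htake : ∀ t (ht : t < s.length), s.take (t+1) = s.take t ++ [s[t]'ht] := by
    intro t ht
    rw [List.take_succ, List.getElem?_eq_getElem ht]
    rfl
  have key : ∀ t, ∀ ht : t < s.length,
      (A.cache (s.take t) \ A.cache (s.take (t+1))).card ≤ 1 ∧
      ((A.cache (s.take t) \ A.cache (s.take (t+1))) ≠ ∅ → s[t] ∉ A.cache (s.take t)) := by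
    intro t ht
    rw [htake t ht]
    by_cases hx : s[t] ∈ A.cache (s.take t)
    · rw [A.hit _ _ hx]; simp
    · refine ⟨?_, fun _ => hx⟩
      rcases lt_or_eq_of_le (A.card_le (s.take t)) with hlt | heq
      · rw [A.miss_notfull _ _ hx hlt]
        have h0 : A.cache (s.take t) \ insert s[t] (A.cache (s.take t)) = ∅ := by
          rw [Finset.sdiff_eq_empty_iff_subset]
          exact Finset.subset_insert _ _
        simp [h0]
      · obtain ⟨y, hy, -, hc⟩ := A.miss_full _ _ hx heq
        rw [hc]
        have hsub : A.cache (s.take t) \ insert s[t] ((A.cache (s.take t)).erase y)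
            ⊆ {y} := by
          intro a ha
          simp only [Finset.mem_sdiff, Finset.mem_insert, Finset.mem_erase, not_or,
            not_and] at ha
          simp only [Finset.mem_singleton]
          by_contra hne
          exact ha.2.2 hne ha.1
        calc (A.cache (s.take t) \ insert s[t] ((A.cache (s.take t)).erase y)).card
            ≤ ({y} : Finset U).card := Finset.card_le_card hsub
          _ = 1 := Finset.card_singleton y
  have part1 : ∀ t < s.length, (A.cache (s.take t) \ A.cache (s.take (t + 1))) ≠ ∅ →
      ∃ x, s[t]? = some x ∧
        (IsNewReq k (s.take t) x ∨ IsWorrisomeReq k (s.take t) (A.cache (s.take t)) x) := by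
    intro t ht hne
    refine ⟨s[t], List.getElem?_eq_getElem ht, ?_⟩
    have hx := (key t ht).2 hne
    by_cases hnew : IsNewReq k (s.take t) s[t]
    · exact Or.inl hnew
    · exact Or.inr ⟨hnew, hx⟩
  refine ⟨part1, ?_⟩
  unfold algCostOf
  set P : ℕ → Prop := fun t => ∃ x, s[t]? = some x ∧
      (IsNewReq k (s.take t) x ∨ IsWorrisomeReq k (s.take t) (A.cache (s.take t)) x)
    with hP
  have hsum : ∑ t ∈ Finset.range s.length,
      (A.cache (s.take t) \ A.cache (s.take (t + 1))).card
      ≤ ∑ t ∈ Finset.range s.length, (if P t then 1 else 0) := by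
    apply Finset.sum_le_sum
    intro t ht
    rw [Finset.mem_range] at ht
    by_cases hne : (A.cache (s.take t) \ A.cache (s.take (t+1))) = ∅
    · simp [hne]
    · rw [if_pos (part1 t ht hne)]
      exact (key t ht).1
  have hcard : ∑ t ∈ Finset.range s.length, (if P t then 1 else 0)
      = ((Finset.range s.length).filter P).card := (Finset.card_filter _ _).symm
  have hsplit : ((Finset.range s.length).filter P) ⊆
      ((Finset.range s.length).filter fun t =>
        ∃ x, s[t]? = some x ∧ IsNewReq k (s.take t) x) ∪
      ((Finset.range s.length).filter fun t =>
        ∃ x, s[t]? = some x ∧ IsWorrisomeReq k (s.take t) (A.cache (s.take t)) x) := by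
    intro t ht
    simp only [Finset.mem_filter, Finset.mem_union, hP] at ht ⊢
    obtain ⟨htr, x, hx, h⟩ := ht
    rcases h with h | h
    · exact Or.inl ⟨htr, x, hx, h⟩
    · exact Or.inr ⟨htr, x, hx, h⟩
  have hfin : ((Finset.range s.length).filter P).card ≤
      newReqCount k s + worrisomeReqCount k A.cache s := by
    unfold newReqCount worrisomeReqCount
    calc ((Finset.range s.length).filter P).card
        ≤ _ := Finset.card_le_card hsplit
      _ ≤ _ := Finset.card_union_le _ _
      _ = _ := by
        congr 1 <;> congr 1 <;> (ext t; simp [Finset.mem_filter])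
  omega


end Paging
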